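/- arXiv:1604.02361 — 3 statements merged into one kernel-verified Lean document; each statement's English description precedes it below -/
import Mathlib

section
/- Let n ≥ 2 and let b_1, …, b_n be complex weights with b_n ≠ 0. Let F^a : ℕ → ℂ be the sequence generated from initial conditions a = (a_0, …, a_{n-1}) ∈ ℂ^n, and let F^0 : ℕ → ℂ be the sequence generated from the initial conditions (0, …, 0, 1) (i.e. F^0(k) = 0 for 0 ≤ k ≤ n−2 and F^0(n−1) = 1). Then for every k ≥ n−1 one has the representation F^a(k) = a_{n-1}·F^0(k) + Σ_{i=1}^{n-1} a_{n-1-i} · Σ_{j=1}^{n-i} b_{i+j}·F^0(k−j). -/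
/-- Representation of a sequence generated from arbitrary initial
conditions `a` in terms of the sequence `F0` generated from `(0, …, 0, 1)`:
for `k ≥ n - 1`,
`Fa k = a (n-1) * F0 k + ∑_{i=1}^{n-1} a (n-1-i) * ∑_{j=1}^{n-i} b (i+j) * F0 (k-j)`. -/
theorem representation_by_fundamental_sequence
    (n : ℕ) (hn : 2 ≤ n) (b : ℕ → ℂ) (hbn : b n ≠ 0)
    (a : ℕ → ℂ) (Fa F0 : ℕ → ℂ)
    (hainit : ∀ k < n, Fa k = a k)
    (harec : ∀ k, n ≤ k → Fa k = ∑ i ∈ Finset.Icc 1 n, b i * Fa (k - i))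
    (h0init : ∀ k < n - 1, F0 k = 0) (h0last : F0 (n - 1) = 1)
    (h0rec : ∀ k, n ≤ k → F0 k = ∑ i ∈ Finset.Icc 1 n, b i * F0 (k - i)) :
    ∀ k, n - 1 ≤ k →
      Fa k = a (n - 1) * F0 k +
        ∑ i ∈ Finset.Icc 1 (n - 1), a (n - 1 - i) *
          ∑ j ∈ Finset.Icc 1 (n - i), b (i + j) * F0 (k - j) := by
  set R : ℕ → ℂ := fun k => a (n - 1) * F0 k +
        ∑ i ∈ Finset.Icc 1 (n - 1), a (n - 1 - i) *
          ∑ j ∈ Finset.Icc 1 (n - i), b (i + j) * F0 (k - j) with hR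
  -- Universal form of the recurrence for F0 (valid for every index).
  have hB : ∀ m, F0 m = (if m = n - 1 then 1 else 0) +
      ∑ p ∈ Finset.Icc 1 n, b p * F0 (m - p) := by
    intro m
    rcases lt_trichotomy m (n - 1) with h | h | h
    · rw [h0init m h, if_neg (by omega), zero_add, Finset.sum_eq_zero]
      intro p hp
      rw [h0init (m - p) (by omega), mul_zero]
    · subst h
      rw [h0last, if_pos rfl]
      rw [Finset.sum_eq_zero, add_zero]
      intro p hp
      simp only [Finset.mem_Icc] at hp
      rw [h0init (n - 1 - p) (by omega), mul_zero]
    · rw [if_neg (by omega), zero_add, h0rec m (by omega)]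
  -- R vanishes below n-1.
  have hR0 : ∀ m < n - 1, R m = 0 := by
    intro m hm
    simp only [hR]
    rw [h0init m hm, mul_zero, zero_add]
    refine Finset.sum_eq_zero fun i hi => ?_
    rw [Finset.sum_eq_zero fun j hj => ?_, mul_zero]
    rw [h0init (m - j) (by omega), mul_zero]
  have key : ∀ k, Fa k = if k < n - 1 then a k else R k := by
    intro k
    induction k using Nat.strong_induction_on with
    | _ k ih =>
      by_cases hk : k < n - 1
      · rw [if_pos hk, hainit k (by omega)]
      · rw [if_neg hk]
        by_cases hk2 : k = n - 1
        · subst hk2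
          rw [hainit _ (by omega)]
          simp only [hR]
          rw [h0last, mul_one]
          rw [Finset.sum_eq_zero, add_zero]
          intro i hi
          simp only [Finset.mem_Icc] at hi
          rw [Finset.sum_eq_zero, mul_zero]
          intro j hj
          simp only [Finset.mem_Icc] at hj
          rw [h0init (n - 1 - j) (by omega), mul_zero]
        · -- main case: k ≥ n
          have hkn : n ≤ k := by omega
          rw [harec k hkn]
          have step1 : ∀ p ∈ Finset.Icc 1 n,
              b p * Fa (k - p) = b p * R (k - p) +
                b p * (if k - p < n - 1 then a (k - p) else 0) := by
            intro p hp
            simp only [Finset.mem_Icc] at hp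
            rw [ih (k - p) (by omega)]
            by_cases h : k - p < n - 1
            · rw [if_pos h, if_pos h, hR0 _ h, mul_zero, zero_add]
            · rw [if_neg h, if_neg h, mul_zero, add_zero]
          rw [Finset.sum_congr rfl step1, Finset.sum_add_distrib]
          -- identity A : the "regular" part
          have expand : (∑ p ∈ Finset.Icc 1 n, b p * R (k - p))
              = a (n - 1) * ∑ p ∈ Finset.Icc 1 n, b p * F0 (k - p)
                + ∑ i ∈ Finset.Icc 1 (n - 1), a (n - 1 - i) *
                    ∑ j ∈ Finset.Icc 1 (n - i), b (i + j) *
                      ∑ p ∈ Finset.Icc 1 n, b p * F0 (k - j - p) := by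
            simp only [hR, mul_add, Finset.mul_sum, Finset.sum_add_distrib]
            congr 1
            · exact Finset.sum_congr rfl fun p _ => by ring
            · rw [Finset.sum_comm]
              refine Finset.sum_congr rfl fun i _ => ?_
              rw [Finset.sum_comm]
              refine Finset.sum_congr rfl fun j _ =>
                Finset.sum_congr rfl fun p _ => ?_
              rw [show k - p - j = k - j - p by omega]
              ring
          -- identity B : the "boundary" part
          have hBkey : (∑ p ∈ Finset.Icc 1 n,
                b p * (if k - p < n - 1 then a (k - p) else 0))
              = ∑ i ∈ Finset.Icc 1 (n - 1), a (n - 1 - i) *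
                  ∑ j ∈ Finset.Icc 1 (n - i), b (i + j) *
                    (if k - j = n - 1 then 1 else 0) := by
            have hL : (∑ p ∈ Finset.Icc 1 n,
                  b p * (if k - p < n - 1 then a (k - p) else 0))
                = ∑ p ∈ (Finset.Icc 1 n).filter (fun p => k - p < n - 1),
                    b p * a (k - p) := by
              rw [Finset.sum_filter]
              refine Finset.sum_congr rfl fun p _ => ?_
              by_cases h : k - p < n - 1
              · rw [if_pos h, if_pos h]
              · rw [if_neg h, if_neg h, mul_zero]
            have hRt : (∑ i ∈ Finset.Icc 1 (n - 1), a (n - 1 - i) *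
                  ∑ j ∈ Finset.Icc 1 (n - i), b (i + j) *
                    (if k - j = n - 1 then 1 else 0))
                = ∑ i ∈ (Finset.Icc 1 (n - 1)).filter
                      (fun i => i + (k - (n - 1)) ≤ n),
                    a (n - 1 - i) * b (i + (k - (n - 1))) := by
              rw [Finset.sum_filter]
              refine Finset.sum_congr rfl fun i hi => ?_
              simp only [Finset.mem_Icc] at hi
              have hinner : (∑ j ∈ Finset.Icc 1 (n - i), b (i + j) *
                    (if k - j = n - 1 then 1 else 0))
                  = ∑ j ∈ Finset.Icc 1 (n - i),
                      (if j = k - (n - 1) then b (i + j) else 0) := by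
                refine Finset.sum_congr rfl fun j hj => ?_
                simp only [Finset.mem_Icc] at hj
                by_cases h : j = k - (n - 1)
                · rw [if_pos h, if_pos (by omega), mul_one]
                · rw [if_neg h, if_neg (by omega), mul_zero]
              rw [hinner, Finset.sum_ite_eq' (Finset.Icc 1 (n - i))]
              by_cases h : k - (n - 1) ∈ Finset.Icc 1 (n - i)
              · simp only [Finset.mem_Icc] at h
                rw [if_pos (by simpa using h), if_pos (by omega)]
              · simp only [Finset.mem_Icc, not_and_or, not_le] at h
                rw [if_neg (by simpa [Finset.mem_Icc] using
                    (by omega : ¬(1 ≤ k - (n-1) ∧ k - (n-1) ≤ n - i))),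
                  if_neg (by omega), mul_zero]
            rw [hL, hRt]
            refine Finset.sum_nbij' (fun p => p - (k - (n - 1)))
              (fun i => i + (k - (n - 1))) ?_ ?_ ?_ ?_ ?_
            · intro p hp
              simp only [Finset.mem_filter, Finset.mem_Icc] at hp ⊢
              omega
            · intro i hi
              simp only [Finset.mem_filter, Finset.mem_Icc] at hi ⊢
              omega
            · intro p hp
              simp only [Finset.mem_filter, Finset.mem_Icc] at hp
              show p - (k - (n - 1)) + (k - (n - 1)) = p
              omega
            · intro i hi
              simp only [Finset.mem_filter, Finset.mem_Icc] at hi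
              show i + (k - (n - 1)) - (k - (n - 1)) = i
              omega
            · intro p hp
              simp only [Finset.mem_filter, Finset.mem_Icc] at hp
              rw [show p - (k - (n - 1)) + (k - (n - 1)) = p by omega,
                show n - 1 - (p - (k - (n - 1))) = k - p by omega]
              ring
          -- Assemble
          rw [expand, hBkey]
          simp only [hR]
          rw [h0rec k hkn]
          have hsplit : ∀ i ∈ Finset.Icc 1 (n - 1),
              a (n - 1 - i) * ∑ j ∈ Finset.Icc 1 (n - i), b (i + j) * F0 (k - j)
              = a (n - 1 - i) * ∑ j ∈ Finset.Icc 1 (n - i), b (i + j) *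
                  ∑ p ∈ Finset.Icc 1 n, b p * F0 (k - j - p)
                + a (n - 1 - i) * ∑ j ∈ Finset.Icc 1 (n - i), b (i + j) *
                  (if k - j = n - 1 then 1 else 0) := by
            intro i hi
            rw [← mul_add, ← Finset.sum_add_distrib]
            congr 1
            refine Finset.sum_congr rfl fun j hj => ?_
            rw [← mul_add, add_comm
              (∑ p ∈ Finset.Icc 1 n, b p * F0 (k - j - p)), ← hB (k - j)]
          rw [Finset.sum_congr rfl hsplit, Finset.sum_add_distrib]
          ring
  intro k hk
  rw [key k]
  rw [if_neg (by omega)]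
end

section
/- Let n ≥ 2 and let b_1, …, b_n be complex weights with b_n ≠ 0. Let F^0 be the sequence generated from initial conditions (0, …, 0, 1) and suppose there exist k_0 ∈ ℕ and Φ ∈ ℂ with Φ ≠ 0 such that F^0(k) ≠ 0 for all k > k_0 and F^0(k+1)/F^0(k) → Φ as k → ∞. Let a = (a_0, …, a_{n-1}) ∈ ℂ^n be initial conditions such that the generated sequence F^a satisfies F^a(k) ≠ 0 for all sufficiently large k, and such that the complex number a_{n-1} + Σ_{i=1}^{n-1} a_{n-1-i} · Σ_{j=1}^{n-i} b_{i+j}·Φ^{−j} is nonzero. Then F^a(k+1)/F^a(k) → Φ as k → ∞. -/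
open Finset Filter

noncomputable def auxC (n : ℕ) (a b : ℕ → ℂ) (j : ℕ) : ℂ :=
  if j = 0 then a (n - 1) else ∑ i ∈ Finset.Icc 1 (n - j), a (n - 1 - i) * b (i + j)

noncomputable def auxG (n : ℕ) (a b F0 : ℕ → ℂ) (k : ℕ) : ℂ :=
  ∑ j ∈ Finset.range n, auxC n a b j * F0 (k - j)

lemma swap1 (n : ℕ) (f : ℕ → ℕ → ℂ) :
    ∑ j ∈ Finset.Icc 1 (n - 1), ∑ i ∈ Finset.Icc 1 (n - j), f i j
      = ∑ i ∈ Finset.Icc 1 (n - 1), ∑ j ∈ Finset.Icc 1 (n - i), f i j :=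
  Finset.sum_comm' (by intro x y; simp only [Finset.mem_Icc]; omega)

lemma swap2 (m : ℕ) (f : ℕ → ℕ → ℂ) :
    ∑ j ∈ Finset.range m, ∑ i ∈ Finset.Icc 1 (m - j), f i j
      = ∑ i ∈ Finset.Icc 1 m, ∑ j ∈ Finset.range (m - i + 1), f i j :=
  Finset.sum_comm' (by intro x y; simp only [Finset.mem_Icc, Finset.mem_range]; omega)

lemma keyB (n : ℕ) (hn : 2 ≤ n) (b a Fa F0 : ℕ → ℂ)
    (hainit : ∀ k < n, Fa k = a k)
    (harec : ∀ k, n ≤ k → Fa k = ∑ i ∈ Finset.Icc 1 n, b i * Fa (k - i))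
    (h0init : ∀ k < n - 1, F0 k = 0) (h0last : F0 (n - 1) = 1)
    (h0rec : ∀ k, n ≤ k → F0 k = ∑ i ∈ Finset.Icc 1 n, b i * F0 (k - i)) :
    ∀ k, n - 1 ≤ k → Fa k = auxG n a b F0 k := by
  intro k
  induction k using Nat.strong_induction_on with
  | _ k IH =>
    intro hk
    rcases lt_or_ge k n with hkn | hkn
    · -- base: k = n - 1
      have hke : k = n - 1 := by omega
      subst hke
      rw [hainit (n - 1) (by omega), auxG]
      rw [Finset.sum_eq_single 0]
      · simp [auxC, h0last]
      · intro j hj hj0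
        rw [h0init (n - 1 - j) (by simp at hj; omega), mul_zero]
      · intro h; exact absurd (Finset.mem_range.mpr (by omega)) h
    · -- recursive case
      have step1 : Fa k = ∑ i ∈ Finset.Icc 1 n, b i *
          (if n - 1 ≤ k - i then auxG n a b F0 (k - i) else a (k - i)) := by
        rw [harec k hkn]
        refine Finset.sum_congr rfl fun i hi => ?_
        simp only [Finset.mem_Icc] at hi
        congr 1
        split_ifs with h
        · exact IH (k - i) (by omega) h
        · exact hainit (k - i) (by omega)
      rw [step1]
      rcases le_or_gt (2 * n - 1) k with hbig | hsmall
      · -- all terms recursive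
        calc ∑ i ∈ Finset.Icc 1 n, b i *
              (if n - 1 ≤ k - i then auxG n a b F0 (k - i) else a (k - i))
            = ∑ i ∈ Finset.Icc 1 n, ∑ j ∈ Finset.range n,
                auxC n a b j * (b i * F0 (k - j - i)) := by
              refine Finset.sum_congr rfl fun i hi => ?_
              simp only [Finset.mem_Icc] at hi
              rw [if_pos (by omega), auxG, Finset.mul_sum]
              refine Finset.sum_congr rfl fun j hj => ?_
              rw [show k - i - j = k - j - i by omega]; ring
          _ = ∑ j ∈ Finset.range n, auxC n a b j * F0 (k - j) := by
              rw [Finset.sum_comm]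
              refine Finset.sum_congr rfl fun j hj => ?_
              simp only [Finset.mem_range] at hj
              rw [← Finset.mul_sum, ← h0rec (k - j) (by omega)]
          _ = auxG n a b F0 k := rfl
      · -- n ≤ k ≤ 2n - 2
        set m := k - (n - 1) with hm
        have hm1 : 1 ≤ m := by omega
        have hmn : m ≤ n - 1 := by omega
        have hsplit : ∑ i ∈ Finset.Icc 1 n, b i *
              (if n - 1 ≤ k - i then auxG n a b F0 (k - i) else a (k - i))
            = (∑ i ∈ Finset.Icc 1 m, b i * auxG n a b F0 (k - i))
              + ∑ i ∈ Finset.Icc (m + 1) n, b i * a (k - i) := by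
          rw [show Finset.Icc 1 n = Finset.Ioc 0 n from Finset.Icc_add_one_left_eq_Ioc 0 n,
            show Finset.Icc 1 m = Finset.Ioc 0 m from Finset.Icc_add_one_left_eq_Ioc 0 m, Finset.Icc_add_one_left_eq_Ioc m n,
            ← Finset.sum_Ioc_consecutive _ (Nat.zero_le m) (by omega : m ≤ n)]
          congr 1
          · refine Finset.sum_congr rfl fun i hi => ?_
            simp only [Finset.mem_Ioc] at hi
            rw [if_pos (by omega)]
          · refine Finset.sum_congr rfl fun i hi => ?_
            simp only [Finset.mem_Ioc] at hi
            rw [if_neg (by omega)]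
        have hsecond : ∑ i ∈ Finset.Icc (m + 1) n, b i * a (k - i) = auxC n a b m := by
          rw [auxC, if_neg (by omega)]
          rw [show Finset.Icc (m + 1) n = (Finset.Icc 1 (n - m)).map (addRightEmbedding m) by
            rw [Finset.map_add_right_Icc]; congr 1 <;> omega]
          rw [Finset.sum_map]
          refine Finset.sum_congr rfl fun t ht => ?_
          simp only [Finset.mem_Icc] at ht
          simp only [addRightEmbedding_apply]
          rw [show k - (t + m) = n - 1 - t by omega]; ring
        have hfirst : ∑ i ∈ Finset.Icc 1 m, b i * auxG n a b F0 (k - i)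
            = ∑ i ∈ Finset.Icc 1 m, ∑ j ∈ Finset.range (m - i + 1),
                b i * (auxC n a b j * F0 (k - i - j)) := by
          refine Finset.sum_congr rfl fun i hi => ?_
          simp only [Finset.mem_Icc] at hi
          rw [auxG, ← Finset.sum_subset
            (show Finset.range (m - i + 1) ⊆ Finset.range n by
              intro x hx; simp only [Finset.mem_range] at hx ⊢; omega)
            (fun j hj hj' => by
              simp only [Finset.mem_range] at hj hj'
              rw [h0init (k - i - j) (by omega), mul_zero]),
            Finset.mul_sum]
        have hG : auxG n a b F0 k
            = (∑ i ∈ Finset.Icc 1 m, ∑ j ∈ Finset.range (m - i + 1),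
                b i * (auxC n a b j * F0 (k - i - j))) + auxC n a b m := by
          rw [auxG, ← Finset.sum_subset
            (show Finset.range (m + 1) ⊆ Finset.range n by
              intro x hx; simp only [Finset.mem_range] at hx ⊢; omega)
            (fun j hj hj' => by
              simp only [Finset.mem_range] at hj hj'
              rw [h0init (k - j) (by omega), mul_zero]),
            Finset.sum_range_succ, show k - m = n - 1 by omega, h0last, mul_one]
          congr 1
          calc ∑ j ∈ Finset.range m, auxC n a b j * F0 (k - j)
              = ∑ j ∈ Finset.range m, ∑ i ∈ Finset.Icc 1 (m - j),
                  auxC n a b j * (b i * F0 (k - j - i)) := by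
                refine Finset.sum_congr rfl fun j hj => ?_
                simp only [Finset.mem_range] at hj
                rw [h0rec (k - j) (by omega), ← Finset.sum_subset
                  (show Finset.Icc 1 (m - j) ⊆ Finset.Icc 1 n by
                    apply Finset.Icc_subset_Icc_right; omega)
                  (fun i hi hi' => by
                    simp only [Finset.mem_Icc] at hi hi'
                    rw [h0init (k - j - i) (by omega), mul_zero]),
                  Finset.mul_sum]
            _ = ∑ i ∈ Finset.Icc 1 m, ∑ j ∈ Finset.range (m - i + 1),
                  b i * (auxC n a b j * F0 (k - i - j)) := by
                rw [swap2 m (fun i j => auxC n a b j * (b i * F0 (k - j - i)))]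
                refine Finset.sum_congr rfl fun i hi => Finset.sum_congr rfl fun j hj => ?_
                simp only [Finset.mem_Icc] at hi
                simp only [Finset.mem_range] at hj
                rw [show k - j - i = k - i - j by omega]; ring
        rw [hsplit, hfirst, hsecond, hG]

lemma denom_eq (n : ℕ) (hn : 2 ≤ n) (a b : ℕ → ℂ) (x : ℂ) :
    ∑ j ∈ Finset.range n, auxC n a b j * x ^ j
      = a (n - 1) + ∑ i ∈ Finset.Icc 1 (n - 1), a (n - 1 - i) *
          ∑ j ∈ Finset.Icc 1 (n - i), b (i + j) * x ^ j := by
  have hr : Finset.range n = insert 0 (Finset.Icc 1 (n - 1)) := by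
    ext t; simp only [Finset.mem_range, Finset.mem_insert, Finset.mem_Icc]; omega
  rw [hr, Finset.sum_insert (by simp)]
  congr 1
  · simp [auxC]
  · calc ∑ j ∈ Finset.Icc 1 (n - 1), auxC n a b j * x ^ j
        = ∑ j ∈ Finset.Icc 1 (n - 1), ∑ i ∈ Finset.Icc 1 (n - j),
            a (n - 1 - i) * (b (i + j) * x ^ j) := by
          refine Finset.sum_congr rfl fun j hj => ?_
          simp only [Finset.mem_Icc] at hj
          rw [auxC, if_neg (by omega), Finset.sum_mul]
          exact Finset.sum_congr rfl fun i _ => by ring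
      _ = _ := by
          rw [swap1]
          exact Finset.sum_congr rfl fun i _ => (Finset.mul_sum _ _ _).symm


/-- If the fundamental sequence `F0` (from initial conditions
`(0, …, 0, 1)`) is eventually nonzero with ratio limit `Φ ≠ 0`, and `Fa` is
generated from initial conditions `a` such that `Fa` is eventually nonzero and
`a (n-1) + ∑_{i=1}^{n-1} a (n-1-i) * ∑_{j=1}^{n-i} b (i+j) * Φ⁻ʲ ≠ 0`,
then the ratio of consecutive terms of `Fa` also converges to `Φ`. -/
theorem ratio_limit_transfer
    (n : ℕ) (hn : 2 ≤ n) (b : ℕ → ℂ) (hbn : b n ≠ 0)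
    (a : ℕ → ℂ) (Fa F0 : ℕ → ℂ)
    (hainit : ∀ k < n, Fa k = a k)
    (harec : ∀ k, n ≤ k → Fa k = ∑ i ∈ Finset.Icc 1 n, b i * Fa (k - i))
    (h0init : ∀ k < n - 1, F0 k = 0) (h0last : F0 (n - 1) = 1)
    (h0rec : ∀ k, n ≤ k → F0 k = ∑ i ∈ Finset.Icc 1 n, b i * F0 (k - i))
    (Φ : ℂ) (hΦ : Φ ≠ 0)
    (k0 : ℕ) (h0nz : ∀ k > k0, F0 k ≠ 0)
    (h0lim : Filter.Tendsto (fun k => F0 (k + 1) / F0 k) Filter.atTop (nhds Φ))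
    (hanz : ∃ N : ℕ, ∀ k ≥ N, Fa k ≠ 0)
    (hden : a (n - 1) +
      ∑ i ∈ Finset.Icc 1 (n - 1), a (n - 1 - i) *
        ∑ j ∈ Finset.Icc 1 (n - i), b (i + j) * Φ⁻¹ ^ j ≠ 0) :
    Filter.Tendsto (fun k => Fa (k + 1) / Fa k) Filter.atTop (nhds Φ) := by
  have hFaG : ∀ k, n - 1 ≤ k → Fa k = ∑ j ∈ Finset.range n, auxC n a b j * F0 (k - j) :=
    keyB n hn b a Fa F0 hainit harec h0init h0last h0rec
  obtain ⟨N, hN⟩ := hanz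
  have hSne : (∑ j ∈ Finset.range n, auxC n a b j * Φ⁻¹ ^ j) ≠ 0 := by
    rw [denom_eq n hn a b Φ⁻¹]; exact hden
  have hratio_inv : Tendsto (fun k => F0 k / F0 (k + 1)) atTop (nhds Φ⁻¹) := by
    refine (h0lim.inv₀ hΦ).congr fun k => ?_
    rw [inv_div]
  have hL : ∀ j : ℕ, Tendsto (fun k => F0 (k - j) / F0 k) atTop (nhds (Φ⁻¹ ^ j)) := by
    intro j
    induction j with
    | zero =>
      rw [pow_zero]
      refine Tendsto.congr' ?_ (tendsto_const_nhds (x := (1 : ℂ)))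
      filter_upwards [eventually_gt_atTop k0] with k hk
      rw [Nat.sub_zero, div_self (h0nz k hk)]
    | succ j ihj =>
      have h1 : Tendsto (fun k => F0 (k - (j + 1)) / F0 (k - j)) atTop (nhds Φ⁻¹) := by
        have h2 := hratio_inv.comp (tendsto_sub_atTop_nat (j + 1))
        refine h2.congr' ?_
        filter_upwards [eventually_ge_atTop (j + 1)] with k hk
        simp only [Function.comp]
        rw [show k - (j + 1) + 1 = k - j by omega]
      have h3 := h1.mul ihj
      have hpow : Φ⁻¹ ^ (j + 1) = Φ⁻¹ * Φ⁻¹ ^ j := by ring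
      rw [hpow]
      refine Tendsto.congr' ?_ h3
      filter_upwards [eventually_gt_atTop (k0 + j)] with k hk
      have hnz : F0 (k - j) ≠ 0 := h0nz _ (by omega)
      have hnz2 : F0 k ≠ 0 := h0nz _ (by omega)
      field_simp
  have hDen : Tendsto (fun k => ∑ j ∈ Finset.range n, auxC n a b j * (F0 (k - j) / F0 k))
      atTop (nhds (∑ j ∈ Finset.range n, auxC n a b j * Φ⁻¹ ^ j)) :=
    tendsto_finset_sum _ fun j _ => (hL j).const_mul _
  have hNum : Tendsto (fun k => ∑ j ∈ Finset.range n, auxC n a b j * (F0 (k + 1 - j) / F0 k))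
      atTop (nhds (Φ * ∑ j ∈ Finset.range n, auxC n a b j * Φ⁻¹ ^ j)) := by
    have hval : Φ * ∑ j ∈ Finset.range n, auxC n a b j * Φ⁻¹ ^ j
        = ∑ j ∈ Finset.range n, auxC n a b j * (Φ * Φ⁻¹ ^ j) := by
      rw [Finset.mul_sum]; exact Finset.sum_congr rfl fun j _ => by ring
    rw [hval]
    refine tendsto_finset_sum _ fun j _ => ?_
    rcases Nat.eq_zero_or_pos j with h0 | hj
    · subst h0
      rw [show Φ * Φ⁻¹ ^ 0 = Φ by simp]
      exact Tendsto.const_mul _ (h0lim.congr fun k => by norm_num)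
    · obtain ⟨t, rfl⟩ : ∃ t, j = t + 1 := ⟨j - 1, by omega⟩
      have hval2 : Φ * Φ⁻¹ ^ (t + 1) = Φ⁻¹ ^ (t + 1 - 1) := by
        rw [pow_succ, mul_comm (Φ⁻¹ ^ t) Φ⁻¹, ← mul_assoc, mul_inv_cancel₀ hΦ, one_mul,
          Nat.add_sub_cancel]
      rw [hval2]
      exact Tendsto.const_mul _ ((hL t).congr fun k => by rw [show k + 1 - (t + 1) = k - t by omega])
  have hq := hNum.div hDen hSne
  rw [mul_div_assoc, div_self hSne, mul_one] at hq
  refine Filter.Tendsto.congr' ?_ hq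
  filter_upwards [eventually_ge_atTop (N + n + k0 + 1)] with k hk
  have h1 : Fa k = ∑ j ∈ Finset.range n, auxC n a b j * F0 (k - j) := hFaG k (by omega)
  have h2 : Fa (k + 1) = ∑ j ∈ Finset.range n, auxC n a b j * F0 (k + 1 - j) := hFaG (k + 1) (by omega)
  have hFk : Fa k ≠ 0 := hN k (by omega)
  have hF0k : F0 k ≠ 0 := h0nz k (by omega)
  have e1 : ∑ j ∈ Finset.range n, auxC n a b j * (F0 (k - j) / F0 k)
      = (∑ j ∈ Finset.range n, auxC n a b j * F0 (k - j)) / F0 k := by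
    rw [Finset.sum_div]; exact Finset.sum_congr rfl fun j _ => (mul_div_assoc _ _ _).symm
  have e2 : ∑ j ∈ Finset.range n, auxC n a b j * (F0 (k + 1 - j) / F0 k)
      = (∑ j ∈ Finset.range n, auxC n a b j * F0 (k + 1 - j)) / F0 k := by
    rw [Finset.sum_div]; exact Finset.sum_congr rfl fun j _ => (mul_div_assoc _ _ _).symm
  simp only [Pi.div_apply]
  rw [e1, e2, ← h1, ← h2, div_div_div_cancel_right₀ hF0k]
end

section
/- Let n ≥ 2 and let b_1, …, b_n be complex weights with b_n ≠ 0 whose characteristic polynomial p(λ) = λ^n − b_1·λ^{n−1} − ⋯ − b_n is asymptotically simple with distinguished root λ_0 (among the roots of p of maximal modulus, λ_0 is the unique one of maximal multiplicity). Then the sequence F^0 generated from initial conditions (0, …, 0, 1) satisfies: there exists k_0 ∈ ℕ such that F^0(k) ≠ 0 for all k > k_0, and F^0(k+1)/F^0(k) → λ_0 as k → ∞. -/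
open Polynomial PowerSeries Filter Finset

set_option linter.unusedVariables false
set_option linter.unusedSectionVars false
set_option maxHeartbeats 1000000


noncomputable def FRV (μ : ℂ) (d : ℕ) : PowerSeries ℂ :=
  PowerSeries.mk fun k => (Nat.choose (d + k) d : ℂ) * μ ^ k

lemma FRV_inv (μ : ℂ) (d : ℕ) :
    ((1 - PowerSeries.C μ * PowerSeries.X) ^ (d + 1)) * FRV μ d = 1 := by
  have h := (PowerSeries.invOneSubPow ℂ (d + 1)).inv_val
  have hval : (PowerSeries.invOneSubPow ℂ (d + 1)).val
      = PowerSeries.mk fun k => (Nat.choose (d + k) d : ℂ) :=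
    PowerSeries.invOneSubPow_val_succ_eq_mk_add_choose ℂ d
  have hinv : (PowerSeries.invOneSubPow ℂ (d + 1)).inv
      = (1 - PowerSeries.X) ^ (d + 1) := rfl
  rw [hval, hinv] at h
  have h2 := congrArg (PowerSeries.rescale μ) h
  rw [map_mul, map_pow, map_sub, map_one, PowerSeries.rescale_X] at h2
  convert h2 using 2
  ext k
  simp [FRV, PowerSeries.coeff_rescale, mul_comm]


lemma FR_sum_Icc (n : ℕ) (f : ℕ → ℂ) :
    ∑ i ∈ Finset.Icc 1 n, f i = ∑ i ∈ Finset.range n, f (i + 1) := by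
  apply Finset.sum_nbij' (fun i => i - 1) (fun i => i + 1) <;>
    simp (config := {contextual := true}) [Finset.mem_Icc, Finset.mem_range] <;> omega

noncomputable def FRQ (n : ℕ) (b : ℕ → ℂ) : Polynomial ℂ :=
  1 - ∑ i ∈ Finset.Icc 1 n, Polynomial.C (b i) * Polynomial.X ^ i

lemma FRQ_coeff (n : ℕ) (b : ℕ → ℂ) (t : ℕ) :
    (FRQ n b).coeff t = if t = 0 then 1 else if t ∈ Finset.Icc 1 n then -(b t) else 0 := by
  rw [FRQ, Polynomial.coeff_sub, Polynomial.finset_sum_coeff]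
  simp only [Polynomial.coeff_C_mul, Polynomial.coeff_X_pow]
  rw [Finset.sum_congr rfl (fun i _ => by rw [mul_ite, mul_one, mul_zero]),
    Finset.sum_ite_eq (Finset.Icc 1 n) t b]
  rcases eq_or_ne t 0 with rfl | ht
  · simp
  · rw [Polynomial.coeff_one]
    simp only [ht, if_neg ht, if_false]
    by_cases h : t ∈ Finset.Icc 1 n <;> simp [h, ht]

lemma FRQ_mul_F0 (n : ℕ) (hn : 2 ≤ n) (b : ℕ → ℂ) (F0 : ℕ → ℂ)
    (h0init : ∀ k < n - 1, F0 k = 0) (h0last : F0 (n - 1) = 1)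
    (h0rec : ∀ k, n ≤ k → F0 k = ∑ i ∈ Finset.Icc 1 n, b i * F0 (k - i)) :
    ((FRQ n b : Polynomial ℂ) : PowerSeries ℂ) * PowerSeries.mk F0
      = PowerSeries.X ^ (n - 1) := by
  ext k
  rw [PowerSeries.coeff_mul, PowerSeries.coeff_X_pow,
    Finset.Nat.sum_antidiagonal_eq_sum_range_succ_mk]
  simp only [Polynomial.coeff_coe, PowerSeries.coeff_mk, FRQ_coeff]
  rw [Finset.sum_range_succ']
  simp only [Nat.succ_ne_zero, if_false, if_pos rfl, if_true, one_mul, Nat.sub_zero]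
  rcases lt_or_ge k n with hk | hk
  · have hz : ∀ i ∈ Finset.range k,
        (if i + 1 ∈ Finset.Icc 1 n then -(b (i+1)) else 0) * F0 (k - (i + 1)) = 0 := by
      intro i hi
      have hik : i + 1 ≤ k := Finset.mem_range.1 hi
      have : F0 (k - (i + 1)) = 0 := by apply h0init; omega
      rw [this, mul_zero]
    rw [Finset.sum_eq_zero hz, zero_add]
    rcases eq_or_ne k (n-1) with rfl | hk'
    · simp [h0last]
    · rw [h0init k (by omega), if_neg hk']
  · have hkn : k ≠ n - 1 := by omega
    rw [if_neg hkn]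
    have hsub : Finset.range n ⊆ Finset.range k := by
      apply Finset.range_subset_range.2; omega
    rw [← Finset.sum_subset hsub (by
      intro i hik hin
      have : ¬ (i + 1 ∈ Finset.Icc 1 n) := by
        simp only [Finset.mem_Icc, Finset.mem_range, not_lt] at *
        omega
      rw [if_neg this, zero_mul])]
    have hc : ∀ i ∈ Finset.range n,
        (if i + 1 ∈ Finset.Icc 1 n then -(b (i+1)) else 0) * F0 (k - (i + 1))
          = -(b (i+1) * F0 (k - (i+1))) := by
      intro i hi
      have : i + 1 ∈ Finset.Icc 1 n := by
        simp only [Finset.mem_Icc]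
        exact ⟨by omega, by have := Finset.mem_range.1 hi; omega⟩
      rw [if_pos this, neg_mul]
    rw [Finset.sum_congr rfl hc, Finset.sum_neg_distrib]
    have hrec := h0rec k hk
    rw [FR_sum_Icc] at hrec
    rw [← hrec]
    ring

lemma FRS_degree_lt (n : ℕ) (b : ℕ → ℂ) (hn : 2 ≤ n) :
    (∑ i ∈ Finset.Icc 1 n, Polynomial.C (b i) * Polynomial.X ^ (n - i)).degree
      < ((Polynomial.X : Polynomial ℂ) ^ n).degree := by
  rw [Polynomial.degree_X_pow]
  apply lt_of_le_of_lt (Polynomial.degree_sum_le _ _)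
  rw [Finset.sup_lt_iff (by exact_mod_cast WithBot.bot_lt_coe n)]
  intro i hi
  apply lt_of_le_of_lt (Polynomial.degree_C_mul_X_pow_le _ _)
  have hi' := Finset.mem_Icc.1 hi
  have h2 : n - i < n := by omega
  exact_mod_cast h2

lemma FRP_monic (n : ℕ) (hn : 2 ≤ n) (b : ℕ → ℂ) (hbn : b n ≠ 0) (P : Polynomial ℂ)
    (hP : P = Polynomial.X ^ n -
      ∑ i ∈ Finset.Icc 1 n, Polynomial.C (b i) * Polynomial.X ^ (n - i)) : P.Monic := by
  rw [hP]
  apply Polynomial.monic_X_pow_sub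
  have := FRS_degree_lt n b hn
  rwa [Polynomial.degree_X_pow] at this

lemma FRP_natDegree (n : ℕ) (hn : 2 ≤ n) (b : ℕ → ℂ) (hbn : b n ≠ 0) (P : Polynomial ℂ)
    (hP : P = Polynomial.X ^ n -
      ∑ i ∈ Finset.Icc 1 n, Polynomial.C (b i) * Polynomial.X ^ (n - i)) :
    P.natDegree = n := by
  rw [hP]
  have h := Polynomial.degree_sub_eq_left_of_degree_lt (FRS_degree_lt n b hn)
  rw [Polynomial.degree_X_pow] at h
  exact Polynomial.natDegree_eq_of_degree_eq_some h

lemma FRP_root_ne_zero (n : ℕ) (hn : 2 ≤ n) (b : ℕ → ℂ) (hbn : b n ≠ 0) (P : Polynomial ℂ)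
    (hP : P = Polynomial.X ^ n -
      ∑ i ∈ Finset.Icc 1 n, Polynomial.C (b i) * Polynomial.X ^ (n - i)) :
    ∀ μ : ℂ, P.IsRoot μ → μ ≠ 0 := by
  intro μ hμ hμ0
  subst hμ0
  rw [Polynomial.IsRoot, hP] at hμ
  simp only [Polynomial.eval_sub, Polynomial.eval_pow, Polynomial.eval_X,
    Polynomial.eval_finset_sum, Polynomial.eval_mul, Polynomial.eval_C] at hμ
  rw [zero_pow (by omega), Finset.sum_eq_single n (fun i hi hne => by
      rw [zero_pow (by simp only [Finset.mem_Icc] at hi; omega), mul_zero])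
    (fun h => absurd (Finset.mem_Icc.2 ⟨by omega, le_refl n⟩) h)] at hμ
  rw [Nat.sub_self, pow_zero, mul_one, zero_sub, neg_eq_zero] at hμ
  exact hbn hμ

lemma FRP_factor (n : ℕ) (hn : 2 ≤ n) (b : ℕ → ℂ) (hbn : b n ≠ 0) (P : Polynomial ℂ)
    (hP : P = Polynomial.X ^ n -
      ∑ i ∈ Finset.Icc 1 n, Polynomial.C (b i) * Polynomial.X ^ (n - i)) :
    P = ∏ μ ∈ P.roots.toFinset,
      (Polynomial.X - Polynomial.C μ) ^ (Polynomial.rootMultiplicity μ P) := by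
  have hm := FRP_monic n hn b hbn P hP
  have hsplit : Polynomial.Splits P := IsAlgClosed.splits P
  have h := hsplit.eq_prod_roots_of_monic hm
  rw [Finset.prod_multiset_map_count] at h
  simpa only [Polynomial.count_roots] using h

lemma FRP_mult_sum (n : ℕ) (hn : 2 ≤ n) (b : ℕ → ℂ) (hbn : b n ≠ 0) (P : Polynomial ℂ)
    (hP : P = Polynomial.X ^ n -
      ∑ i ∈ Finset.Icc 1 n, Polynomial.C (b i) * Polynomial.X ^ (n - i)) :
    ∑ μ ∈ P.roots.toFinset, Polynomial.rootMultiplicity μ P = n := by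
  have hm := FRP_monic n hn b hbn P hP
  have hsplit : Polynomial.Splits P := IsAlgClosed.splits P
  have hcard := (Polynomial.splits_iff_card_roots).1 hsplit
  rw [FRP_natDegree n hn b hbn P hP] at hcard
  rw [← hcard, ← Multiset.toFinset_sum_count_eq]
  exact Finset.sum_congr rfl fun μ _ => (Polynomial.count_roots P).symm

-- assuming the facts from part 3 as hypotheses
lemma FRQ_factor (n : ℕ) (hn : 2 ≤ n) (b : ℕ → ℂ) (P : Polynomial ℂ)
    (hP : P = Polynomial.X ^ n -
      ∑ i ∈ Finset.Icc 1 n, Polynomial.C (b i) * Polynomial.X ^ (n - i))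
    (hfac : P = ∏ μ ∈ P.roots.toFinset,
      (Polynomial.X - Polynomial.C μ) ^ (P.rootMultiplicity μ))
    (hsum : ∑ μ ∈ P.roots.toFinset, P.rootMultiplicity μ = n)
    (h0 : ∀ μ ∈ P.roots.toFinset, μ ≠ 0) :
    FRQ n b = ∏ ν ∈ P.roots.toFinset,
      (1 - Polynomial.C ν * Polynomial.X) ^ (P.rootMultiplicity ν) := by
  apply Polynomial.eq_of_infinite_eval_eq
  apply Set.Infinite.mono (s := {(0:ℂ)}ᶜ)
  · intro x hx
    simp only [Set.mem_compl_iff, Set.mem_singleton_iff] at hx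
    show _ = _
    have hxne : x ≠ 0 := hx
    have heval : ∀ q r : Polynomial ℂ, True := fun _ _ => trivial
    have hPeval : ∀ y : ℂ, P.eval y
        = ∏ μ ∈ P.roots.toFinset, (y - μ) ^ (P.rootMultiplicity μ) := by
      intro y
      conv_lhs => rw [hfac]
      rw [Polynomial.eval_prod]
      exact Finset.prod_congr rfl fun μ _ => by
        rw [Polynomial.eval_pow, Polynomial.eval_sub, Polynomial.eval_X, Polynomial.eval_C]
    have hprod : (∏ ν ∈ P.roots.toFinset,
        (1 - Polynomial.C ν * Polynomial.X) ^ (P.rootMultiplicity ν)).eval x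
        = x ^ n * P.eval x⁻¹ := by
      rw [Polynomial.eval_prod, hPeval, ← hsum, ← Finset.prod_pow_eq_pow_sum, ← Finset.prod_mul_distrib]
      apply Finset.prod_congr rfl
      intro ν _
      rw [Polynomial.eval_pow, Polynomial.eval_sub, Polynomial.eval_one, Polynomial.eval_mul,
        Polynomial.eval_C, Polynomial.eval_X, ← mul_pow]
      congr 1
      field_simp
    rw [hprod, hP]
    simp only [Polynomial.eval_sub, Polynomial.eval_pow, Polynomial.eval_X,
      Polynomial.eval_finset_sum, Polynomial.eval_mul, Polynomial.eval_C, FRQ,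
      Polynomial.eval_one]
    rw [mul_sub, Finset.mul_sum, inv_pow, mul_inv_cancel₀ (pow_ne_zero n hxne)]
    congr 1
    apply Finset.sum_congr rfl
    intro i hi
    have hi' := Finset.mem_Icc.1 hi
    have hxn : x ^ n = x ^ i * x ^ (n - i) := by rw [← pow_add]; congr 1; omega
    rw [hxn]
    have hne : x ^ (n - i) ≠ 0 := pow_ne_zero _ hxne
    field_simp
    rw [mul_assoc, ← mul_pow, mul_one_div_cancel hxne, one_pow, mul_one]
  · exact Set.Finite.infinite_compl (Set.finite_singleton 0)

lemma FRQ_factor' (n : ℕ) (hn : 2 ≤ n) (b : ℕ → ℂ) (hbn : b n ≠ 0) (P : Polynomial ℂ)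
    (hP : P = Polynomial.X ^ n -
      ∑ i ∈ Finset.Icc 1 n, Polynomial.C (b i) * Polynomial.X ^ (n - i)) :
    FRQ n b = ∏ ν ∈ P.roots.toFinset,
      (1 - Polynomial.C ν * Polynomial.X) ^ (Polynomial.rootMultiplicity ν P) := by
  have hPne : P ≠ 0 := (FRP_monic n hn b hbn P hP).ne_zero
  apply FRQ_factor n hn b P hP (FRP_factor n hn b hbn P hP) (FRP_mult_sum n hn b hbn P hP)
  intro μ hμ
  apply FRP_root_ne_zero n hn b hbn P hP
  rw [Multiset.mem_toFinset, Polynomial.mem_roots hPne] at hμ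
  exact hμ


section PF
open scoped algebraMap
lemma FR_partial_fractions (n : ℕ) (hn : 1 ≤ n) (s : Finset ℂ) (m : ℂ → ℕ)
    (hm : ∀ ν ∈ s, 1 ≤ m ν) (h0 : ∀ ν ∈ s, ν ≠ 0)
    (hsum : ∑ ν ∈ s, m ν = n) :
    ∃ r : ℂ → Polynomial ℂ, (∀ μ ∈ s, (r μ).degree < (m μ : ℕ)) ∧
      (Polynomial.X ^ (n-1) : Polynomial ℂ)
        = ∑ μ ∈ s, r μ * ∏ ν ∈ s.erase μ,
            (Polynomial.X - Polynomial.C ν⁻¹) ^ (m ν) := by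
  classical
  set g : ℂ → Polynomial ℂ := fun ν => (Polynomial.X - Polynomial.C ν⁻¹) ^ (m ν) with hg
  have hgmonic : ∀ ν ∈ s, (g ν).Monic := fun ν _ => (Polynomial.monic_X_sub_C _).pow _
  have hgdeg : ∀ ν, (g ν).degree = (m ν : ℕ) := by
    intro ν
    rw [hg]
    simp [Polynomial.degree_pow, Polynomial.degree_X_sub_C]
  have hcop : Set.Pairwise ↑s fun i j => IsCoprime (g i) (g j) := by
    intro i hi j hj hij
    apply IsCoprime.pow
    apply Polynomial.isCoprime_X_sub_C_of_isUnit_sub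
    have : i⁻¹ ≠ j⁻¹ := fun h => hij (inv_injective h)
    exact (sub_ne_zero_of_ne this).isUnit
  obtain ⟨q, r, hdeg, heq⟩ := div_prod_eq_quo_add_sum_rem_div (RatFunc ℂ)
    (Polynomial.X ^ (n-1)) hgmonic hcop
  set φ : Polynomial ℂ →+* RatFunc ℂ := (algebraMap (Polynomial ℂ) (RatFunc ℂ)) with hφ
  set f : Polynomial ℂ := Polynomial.X ^ (n-1) with hf
  set G : Polynomial ℂ := ∏ ν ∈ s, g ν with hG
  have heq' : φ f / ∏ i ∈ s, φ (g i) = φ q + ∑ i ∈ s, φ (r i) / φ (g i) := heq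
  have hGmonic : G.Monic := Polynomial.monic_prod_of_monic _ _ hgmonic
  have hgne : ∀ ν ∈ s, φ (g ν) ≠ 0 := by
    intro ν hν
    rw [hφ, Ne, FaithfulSMul.algebraMap_eq_zero_iff]
    exact (hgmonic ν hν).ne_zero
  have hGne : φ G ≠ 0 := by
    rw [hφ, Ne, FaithfulSMul.algebraMap_eq_zero_iff]
    exact hGmonic.ne_zero
  have hGcast : φ G = ∏ ν ∈ s, φ (g ν) := by rw [hG, map_prod]
  have key : φ f = φ (q * G + ∑ i ∈ s, r i * ∏ ν ∈ s.erase i, g ν) := by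
    rw [map_add, map_mul, map_sum]
    have h1 : φ f = (φ f / φ G) * φ G := by rw [div_mul_cancel₀ _ hGne]
    rw [h1, hGcast, heq', add_mul, Finset.sum_mul, ← hGcast]
    congr 1
    apply Finset.sum_congr rfl
    intro i hi
    have hGi : φ G = φ (g i) * ∏ ν ∈ s.erase i, φ (g ν) := by
      rw [hGcast, ← Finset.mul_prod_erase s _ hi]
    rw [hGi, div_mul_eq_mul_div, mul_comm (φ (g i)) _, ← mul_assoc,
      mul_div_assoc, div_self (hgne i hi), mul_one, map_mul, map_prod]
  have hpoly : f = q * G + ∑ i ∈ s, r i * ∏ ν ∈ s.erase i, g ν :=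
    IsFractionRing.injective (Polynomial ℂ) (RatFunc ℂ) key
  have hGdeg : G.degree = (n : ℕ) := by
    rw [hG, Polynomial.degree_prod, ← hsum]
    rw [Finset.sum_congr rfl fun ν _ => hgdeg ν]
    exact (Nat.cast_sum s m).symm
  have hsumdeg : (∑ i ∈ s, r i * ∏ ν ∈ s.erase i, g ν).degree < (n : ℕ) := by
    apply lt_of_le_of_lt (Polynomial.degree_sum_le _ _)
    rw [Finset.sup_lt_iff (by exact_mod_cast WithBot.bot_lt_coe n)]
    intro i hi
    rw [Polynomial.degree_mul]
    have herase : (∏ ν ∈ s.erase i, g ν).degree = ((n - m i : ℕ) : WithBot ℕ) := by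
      rw [Polynomial.degree_prod, Finset.sum_congr rfl fun ν _ => hgdeg ν,
        ← Nat.cast_sum]
      congr 1
      have h3 := Finset.sum_erase_add s m hi
      omega
    rw [herase]
    have hdeg' := hdeg i hi
    rw [hgdeg i] at hdeg'
    calc (r i).degree + ((n - m i : ℕ) : WithBot ℕ)
        < ((m i : ℕ) : WithBot ℕ) + ((n - m i : ℕ) : WithBot ℕ) :=
          WithBot.add_lt_add_right (by exact_mod_cast WithBot.coe_ne_bot) hdeg'
      _ = ((n : ℕ) : WithBot ℕ) := by
          rw [← Nat.cast_add]
          congr 1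
          have hmi : m i ≤ n := by
            rw [← hsum]
            exact Finset.single_le_sum (f := m) (fun _ _ => Nat.zero_le _) hi
          omega
  have hfdeg : f.degree < (n : ℕ) := by
    rw [hf, Polynomial.degree_X_pow]
    have h4 : n - 1 < n := by omega
    exact_mod_cast h4
  have hq : q = 0 := by
    by_contra hqne
    have h1 : (q * G).degree = q.degree + (n : ℕ) := by rw [Polynomial.degree_mul, hGdeg]
    have h2 : ((n : ℕ) : WithBot ℕ) ≤ (q * G).degree := by
      rw [h1]
      calc ((n:ℕ) : WithBot ℕ) = 0 + (n : ℕ) := by rw [zero_add]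
        _ ≤ q.degree + (n : ℕ) := add_le_add_left (Polynomial.zero_le_degree_iff.2 hqne) _
    have h3 : (q * G).degree < (n : ℕ) := by
      have h5 : q * G = f - ∑ i ∈ s, r i * ∏ ν ∈ s.erase i, g ν := by
        rw [hpoly]; ring
      rw [h5]
      apply lt_of_le_of_lt (Polynomial.degree_sub_le _ _)
      exact max_lt hfdeg hsumdeg
    exact absurd (lt_of_le_of_lt h2 h3) (lt_irrefl _)
  refine ⟨r, fun μ hμ => by rw [← hgdeg μ]; exact hdeg μ hμ, ?_⟩
  rw [hq, zero_mul, zero_add] at hpoly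
  exact hpoly


end PF

lemma FR_taylor (a : ℂ) (p : Polynomial ℂ) (M : ℕ) (hM : 1 ≤ M) (hdeg : p.degree < (M : ℕ)) :
    p = ∑ j ∈ Finset.range M,
      Polynomial.C ((Polynomial.taylor a p).coeff j) * (Polynomial.X - Polynomial.C a) ^ j := by
  conv_lhs => rw [← Polynomial.sum_taylor_eq p a]
  rw [Polynomial.sum_over_range' _ (by intro n; rw [map_zero, zero_mul]) M]
  rw [Polynomial.natDegree_taylor]
  rcases eq_or_ne p 0 with rfl | hp
  · simpa using (show 0 < M by omega)
  · exact (Polynomial.natDegree_lt_iff_degree_lt hp).2 hdeg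

-- transform (X - C ν⁻¹) into (1 - C ν X)
lemma FR_lin_transform (ν : ℂ) (hν : ν ≠ 0) :
    (Polynomial.X - Polynomial.C ν⁻¹ : Polynomial ℂ)
      = Polynomial.C (-ν⁻¹) * (1 - Polynomial.C ν * Polynomial.X) := by
  rw [map_neg, neg_mul, mul_sub, mul_one, ← mul_assoc, ← map_mul,
    inv_mul_cancel₀ hν, map_one, one_mul, neg_sub]


lemma FR_choose_ratio_le (d e k : ℕ) (hde : d < e) :
    (Nat.choose (d+k) d : ℝ) * (k+1) ≤ (d+1) * (Nat.choose (e+k) e : ℝ) := by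
  have h1 : Nat.choose (d+k) d * (k+1) ≤ Nat.choose (d+k) d * (d+k+1) :=
    Nat.mul_le_mul_left _ (by omega)
  have h2 : (d+k+1) * Nat.choose (d+k) d = Nat.choose (d+k+1) (d+1) * (d+1) :=
    Nat.add_one_mul_choose_eq (d+k) d
  have h3 : Nat.choose (d+k+1) (d+1) ≤ Nat.choose (e+k) e := by
    have ha : Nat.choose (d+k+1) (d+1) = Nat.choose (d+1+k) k := by
      rw [show d+k+1 = d+1+k by omega]
      exact (Nat.choose_symm_add (a := d+1) (b := k)) ▸ rfl
    have hb : Nat.choose (e+k) e = Nat.choose (e+k) k := by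
      exact Nat.choose_symm_add (a := e) (b := k) ▸ rfl
    rw [ha, hb]
    exact Nat.choose_le_choose k (by omega)
  have : Nat.choose (d+k) d * (k+1) ≤ (d+1) * Nat.choose (e+k) e := by
    calc Nat.choose (d+k) d * (k+1) ≤ Nat.choose (d+k) d * (d+k+1) := h1
      _ = (d+k+1) * Nat.choose (d+k) d := by ring
      _ = Nat.choose (d+k+1) (d+1) * (d+1) := h2
      _ ≤ Nat.choose (e+k) e * (d+1) := Nat.mul_le_mul_right _ h3
      _ = (d+1) * Nat.choose (e+k) e := by ring
  exact_mod_cast this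

lemma FR_term_tendsto_zero (μ lam0 : ℂ) (hlam0 : lam0 ≠ 0) (d e : ℕ)
    (hcase : ‖μ‖ < ‖lam0‖
      ∨ (‖μ‖ = ‖lam0‖ ∧ d < e)) :
    Filter.Tendsto (fun k : ℕ =>
        ((Nat.choose (d+k) d : ℂ) * μ^k) / ((Nat.choose (e+k) e : ℂ) * lam0^k))
      Filter.atTop (nhds 0) := by
  have hl0 : (0:ℝ) < ‖lam0‖ := by
    exact norm_pos_iff.2 hlam0
  have hnorm : ∀ k : ℕ,
      ‖((Nat.choose (d+k) d : ℂ) * μ^k) / ((Nat.choose (e+k) e : ℂ) * lam0^k)‖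
        = ((Nat.choose (d+k) d : ℝ) * (‖μ‖)^k)
          / ((Nat.choose (e+k) e : ℝ) * (‖lam0‖)^k) := by
    intro k
    rw [norm_div, norm_mul, norm_mul, norm_pow, norm_pow]
    norm_num [Complex.norm_natCast]
  have hchoosepos : ∀ (e k : ℕ), (0:ℝ) < (Nat.choose (e+k) e : ℝ) := by
    intro e k
    exact_mod_cast Nat.choose_pos (by omega)
  rcases hcase with hlt | ⟨heq, hde⟩
  · -- |μ| < |lam0|
    set ρ : ℝ := ‖μ‖ / ‖lam0‖ with hρ
    have hρ0 : 0 ≤ ρ := div_nonneg (norm_nonneg _) hl0.le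
    have hρ1 : ρ < 1 := (div_lt_one hl0).2 hlt
    refine squeeze_zero_norm' (f := fun k : ℕ =>
        ((Nat.choose (d+k) d : ℂ) * μ^k) / ((Nat.choose (e+k) e : ℂ) * lam0^k)) (a := fun k => (2:ℝ)^d * ((k:ℝ)^d * ρ^k)) ?_ ?_
    · filter_upwards [eventually_ge_atTop d] with k hk
      rw [hnorm k]
      have hb1 : ((Nat.choose (d+k) d : ℝ) * (‖μ‖)^k)
          / ((Nat.choose (e+k) e : ℝ) * (‖lam0‖)^k)
          ≤ ((Nat.choose (d+k) d : ℝ) * (‖μ‖)^k) / (1 * (‖lam0‖)^k) := by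
        apply div_le_div_of_nonneg_left
        · positivity
        · rw [one_mul]; positivity
        · apply mul_le_mul_of_nonneg_right _ (by positivity)
          exact_mod_cast Nat.one_le_iff_ne_zero.2 (Nat.choose_pos (show e ≤ e+k by omega)).ne'
      apply le_trans hb1
      rw [one_mul, mul_div_assoc, ← div_pow]
      have hb2 : (Nat.choose (d+k) d : ℝ) ≤ (2:ℝ)^d * (k:ℝ)^d := by
        have h1 : Nat.choose (d+k) d ≤ (d+k)^d := Nat.choose_le_pow (d+k) d
        have h2 : (d+k)^d ≤ (2*k)^d := Nat.pow_le_pow_left (by omega) d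
        calc (Nat.choose (d+k) d : ℝ) ≤ ((d+k : ℕ) : ℝ)^d := by exact_mod_cast h1
          _ ≤ ((2*k : ℕ):ℝ)^d := by exact_mod_cast h2
          _ = (2:ℝ)^d * (k:ℝ)^d := by push_cast; rw [mul_pow]
      calc (Nat.choose (d+k) d : ℝ) * ρ^k ≤ (2:ℝ)^d * (k:ℝ)^d * ρ^k := by
            apply mul_le_mul_of_nonneg_right hb2 (by positivity)
        _ = (2:ℝ)^d * ((k:ℝ)^d * ρ^k) := by ring
    · have := tendsto_pow_const_mul_const_pow_of_lt_one d hρ0 hρ1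
      have h2 := this.const_mul ((2:ℝ)^d)
      simpa using h2
  · -- equal modulus, d < e
    refine squeeze_zero_norm' (f := fun k : ℕ =>
        ((Nat.choose (d+k) d : ℂ) * μ^k) / ((Nat.choose (e+k) e : ℂ) * lam0^k)) (a := fun k => ((d:ℝ)+1) * (1/((k:ℝ)+1))) ?_ ?_
    · filter_upwards with k
      rw [hnorm k, heq]
      have hpos : (0:ℝ) < (‖lam0‖)^k := by positivity
      have hsimp : (Nat.choose (d+k) d : ℝ) * (‖lam0‖)^k
          / ((Nat.choose (e+k) e : ℝ) * (‖lam0‖)^k)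
          = (Nat.choose (d+k) d : ℝ) / (Nat.choose (e+k) e : ℝ) := by
        rw [mul_comm ((Nat.choose (d+k) d : ℝ)) _, mul_comm ((Nat.choose (e+k) e : ℝ)) _,
          mul_div_mul_left _ _ hpos.ne']
      rw [hsimp, mul_one_div]
      have hk1 : (0:ℝ) < (k:ℝ)+1 := by positivity
      rw [div_le_div_iff₀ (hchoosepos e k) hk1]
      exact FR_choose_ratio_le d e k hde
    · have := tendsto_one_div_add_atTop_nhds_zero_nat.const_mul ((d:ℝ)+1)
      simpa using this

theorem FR_rep (n : ℕ) (hn : 2 ≤ n) (b : ℕ → ℂ) (hbn : b n ≠ 0) (P : Polynomial ℂ)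
    (hP : P = Polynomial.X ^ n -
      ∑ i ∈ Finset.Icc 1 n, Polynomial.C (b i) * Polynomial.X ^ (n - i))
    (F0 : ℕ → ℂ)
    (h0init : ∀ k < n - 1, F0 k = 0) (h0last : F0 (n - 1) = 1)
    (h0rec : ∀ k, n ≤ k → F0 k = ∑ i ∈ Finset.Icc 1 n, b i * F0 (k - i)) :
    ∃ A : ℂ → ℕ → ℂ,
      (∀ μ ∈ P.roots.toFinset, A μ 0 ≠ 0) ∧
      ∀ k, F0 k = ∑ μ ∈ P.roots.toFinset,
        ∑ j ∈ Finset.range (Polynomial.rootMultiplicity μ P),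
          A μ j * ((Nat.choose ((Polynomial.rootMultiplicity μ P) - 1 - j + k)
              ((Polynomial.rootMultiplicity μ P) - 1 - j) : ℂ) * μ ^ k) := by
  classical
  set s : Finset ℂ := P.roots.toFinset with hs
  set m : ℂ → ℕ := fun μ => Polynomial.rootMultiplicity μ P with hmdef
  have hPne : P ≠ 0 := (FRP_monic n hn b hbn P hP).ne_zero
  have hroot_mem : ∀ μ ∈ s, P.IsRoot μ := by
    intro μ hμ
    rw [hs, Multiset.mem_toFinset, Polynomial.mem_roots hPne] at hμ
    exact hμ
  have hm1 : ∀ μ ∈ s, 1 ≤ m μ := by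
    intro μ hμ
    exact (Polynomial.rootMultiplicity_pos hPne).2 (hroot_mem μ hμ)
  have h0 : ∀ μ ∈ s, μ ≠ 0 := fun μ hμ =>
    FRP_root_ne_zero n hn b hbn P hP μ (hroot_mem μ hμ)
  have hsum : ∑ ν ∈ s, m ν = n := FRP_mult_sum n hn b hbn P hP
  obtain ⟨r, hrdeg, hrepoly⟩ := FR_partial_fractions n (by omega) s m hm1 h0 hsum
  set c : ℂ → ℕ → ℂ := fun μ j => (Polynomial.taylor μ⁻¹ (r μ)).coeff j with hcdef
  set A : ℂ → ℕ → ℂ := fun μ j =>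
    c μ j * (-μ⁻¹)^j * ∏ ν ∈ s.erase μ, (-ν⁻¹)^(m ν) with hAdef
  -- nonvanishing
  have hA0 : ∀ μ ∈ s, A μ 0 ≠ 0 := by
    intro μ0 hμ0
    have hc0 : c μ0 0 = (r μ0).eval μ0⁻¹ := by
      rw [hcdef]; exact Polynomial.taylor_coeff_zero μ0⁻¹ (r μ0)
    have heval := congrArg (Polynomial.eval μ0⁻¹) hrepoly
    rw [Polynomial.eval_pow, Polynomial.eval_X, Polynomial.eval_finset_sum] at heval
    rw [Finset.sum_eq_single μ0 (fun μ hμ hne => by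
        rw [Polynomial.eval_mul, Polynomial.eval_prod]
        have hmem : μ0 ∈ (s.erase μ) := Finset.mem_erase.2 ⟨Ne.symm hne, hμ0⟩
        rw [Finset.prod_eq_zero hmem (by
          rw [Polynomial.eval_pow, Polynomial.eval_sub, Polynomial.eval_X, Polynomial.eval_C,
            sub_self, zero_pow (by have := hm1 μ0 hμ0; omega)]), mul_zero])
      (fun h => absurd hμ0 h)] at heval
    have hne1 : (μ0⁻¹)^(n-1) ≠ 0 := pow_ne_zero _ (inv_ne_zero (h0 μ0 hμ0))
    rw [heval] at hne1
    have hrne : (r μ0).eval μ0⁻¹ ≠ 0 := by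
      intro hzero
      rw [Polynomial.eval_mul, hzero, zero_mul] at hne1
      exact hne1 rfl
    rw [hAdef]
    simp only
    apply mul_ne_zero
    apply mul_ne_zero
    · rw [hc0]; exact hrne
    · exact pow_ne_zero _ (neg_ne_zero.2 (inv_ne_zero (h0 μ0 hμ0)))
    · rw [Finset.prod_ne_zero_iff]
      intro ν hν
      exact pow_ne_zero _ (neg_ne_zero.2 (inv_ne_zero (h0 ν (Finset.mem_of_mem_erase hν))))
  -- polynomial identity in transformed variables
  have hpoly2 : (Polynomial.X ^ (n-1) : Polynomial ℂ)
      = ∑ μ ∈ s, ∑ j ∈ Finset.range (m μ), Polynomial.C (A μ j) *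
          ((1 - Polynomial.C μ * Polynomial.X) ^ j *
            ∏ ν ∈ s.erase μ, (1 - Polynomial.C ν * Polynomial.X) ^ (m ν)) := by
    rw [hrepoly]
    apply Finset.sum_congr rfl
    intro μ hμ
    have hrμ := FR_taylor μ⁻¹ (r μ) (m μ) (hm1 μ hμ) (by exact_mod_cast hrdeg μ hμ)
    conv_lhs => rw [hrμ]
    rw [Finset.sum_mul]
    apply Finset.sum_congr rfl
    intro j hj
    have hprod : (∏ ν ∈ s.erase μ, (Polynomial.X - Polynomial.C ν⁻¹) ^ (m ν))
        = Polynomial.C (∏ ν ∈ s.erase μ, (-ν⁻¹)^(m ν)) *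
          ∏ ν ∈ s.erase μ, (1 - Polynomial.C ν * Polynomial.X) ^ (m ν) := by
      rw [map_prod, ← Finset.prod_mul_distrib]
      apply Finset.prod_congr rfl
      intro ν hν
      rw [FR_lin_transform ν (h0 ν (Finset.mem_of_mem_erase hν)), mul_pow, map_pow]
    rw [FR_lin_transform μ (h0 μ hμ), mul_pow, hprod, hAdef]
    simp only [map_mul, map_pow]
    ring
  -- power series
  set Qs : PowerSeries ℂ := ((FRQ n b : Polynomial ℂ) : PowerSeries ℂ) with hQs
  have hQsfac : Qs = ∏ ν ∈ s, (1 - PowerSeries.C ν * PowerSeries.X) ^ (m ν) := by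
    rw [hQs, FRQ_factor' n hn b hbn P hP]
    rw [← Polynomial.coeToPowerSeries.ringHom_apply, map_prod]
    apply Finset.prod_congr rfl
    intro ν _
    rw [map_pow, map_sub, map_one, map_mul, Polynomial.coeToPowerSeries.ringHom_apply,
      Polynomial.coeToPowerSeries.ringHom_apply, Polynomial.coe_C, Polynomial.coe_X]
  set T : PowerSeries ℂ := ∑ μ ∈ s, ∑ j ∈ Finset.range (m μ),
    PowerSeries.C (A μ j) * FRV μ (m μ - 1 - j) with hT
  have hQT : Qs * T = PowerSeries.X ^ (n-1) := by
    rw [hT, Finset.mul_sum]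
    have hterm : ∀ μ ∈ s, ∀ j ∈ Finset.range (m μ),
        Qs * (PowerSeries.C (A μ j) * FRV μ (m μ - 1 - j))
          = PowerSeries.C (A μ j) * ((1 - PowerSeries.C μ * PowerSeries.X) ^ j *
              ∏ ν ∈ s.erase μ, (1 - PowerSeries.C ν * PowerSeries.X) ^ (m ν)) := by
      intro μ hμ j hj
      have hjm : j < m μ := Finset.mem_range.1 hj
      set d : ℕ := m μ - 1 - j with hd
      have hmμ : m μ = j + (d + 1) := by
        have := hm1 μ hμ; omega
      have hQμ : Qs = (1 - PowerSeries.C μ * PowerSeries.X) ^ j *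
          ((1 - PowerSeries.C μ * PowerSeries.X) ^ (d+1) *
            ∏ ν ∈ s.erase μ, (1 - PowerSeries.C ν * PowerSeries.X) ^ (m ν)) := by
        rw [hQsfac, ← Finset.mul_prod_erase s _ hμ]
        conv_lhs => rw [hmμ]
        rw [pow_add, mul_assoc]
      rw [hQμ]
      calc (1 - PowerSeries.C μ * PowerSeries.X) ^ j *
            ((1 - PowerSeries.C μ * PowerSeries.X) ^ (d+1) *
              ∏ ν ∈ s.erase μ, (1 - PowerSeries.C ν * PowerSeries.X) ^ (m ν)) *
            (PowerSeries.C (A μ j) * FRV μ d)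
          = PowerSeries.C (A μ j) * ((1 - PowerSeries.C μ * PowerSeries.X) ^ j *
              ∏ ν ∈ s.erase μ, (1 - PowerSeries.C ν * PowerSeries.X) ^ (m ν)) *
              ((1 - PowerSeries.C μ * PowerSeries.X) ^ (d+1) * FRV μ d) := by ring
        _ = _ := by rw [FRV_inv μ d, mul_one]
    have hps := congrArg (Polynomial.coeToPowerSeries.ringHom (R := ℂ)) hpoly2
    rw [map_pow, map_sum] at hps
    simp only [map_sum, map_mul, map_pow, map_prod, map_sub, map_one,
      Polynomial.coeToPowerSeries.ringHom_apply, Polynomial.coe_C, Polynomial.coe_X] at hps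
    calc ∑ μ ∈ s, Qs * ∑ j ∈ Finset.range (m μ),
          PowerSeries.C (A μ j) * FRV μ (m μ - 1 - j)
        = ∑ μ ∈ s, ∑ j ∈ Finset.range (m μ),
            PowerSeries.C (A μ j) * ((1 - PowerSeries.C μ * PowerSeries.X) ^ j *
              ∏ ν ∈ s.erase μ, (1 - PowerSeries.C ν * PowerSeries.X) ^ (m ν)) := by
          apply Finset.sum_congr rfl
          intro μ hμ
          rw [Finset.mul_sum]
          exact Finset.sum_congr rfl (hterm μ hμ)
      _ = PowerSeries.X ^ (n-1) := hps.symm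
  -- conclude mk F0 = T
  have hQF := FRQ_mul_F0 n hn b F0 h0init h0last h0rec
  have hQsne : Qs ≠ 0 := by
    intro hzero
    have h1 : (PowerSeries.coeff 0) Qs = 1 := by
      rw [hQs, Polynomial.coeff_coe, FRQ_coeff]
      simp
    rw [hzero, map_zero] at h1
    exact one_ne_zero h1.symm
  have hFT : PowerSeries.mk F0 = T := by
    apply mul_left_cancel₀ hQsne
    rw [hQT, ← hQF, hQs]
  refine ⟨A, hA0, ?_⟩
  intro k
  have h1 : F0 k = (PowerSeries.coeff k) (PowerSeries.mk F0) := by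
    rw [PowerSeries.coeff_mk]
  rw [h1, hFT, hT, map_sum]
  apply Finset.sum_congr rfl
  intro μ hμ
  rw [map_sum]
  apply Finset.sum_congr rfl
  intro j hj
  rw [PowerSeries.coeff_C_mul, FRV, PowerSeries.coeff_mk]

/-- If the characteristic polynomial
`P = X^n - ∑_{i=1}^n b_i X^(n-i)` is asymptotically simple with distinguished
root `lam0`, then the fundamental sequence `F0` generated from initial
conditions `(0, …, 0, 1)` is eventually nonzero and its ratio of consecutive
terms converges to `lam0`. -/
theorem fundamental_ratio_limit_of_asymptotically_simple
    (n : ℕ) (hn : 2 ≤ n) (b : ℕ → ℂ) (hbn : b n ≠ 0)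
    (P : Polynomial ℂ)
    (hP : P = Polynomial.X ^ n -
      ∑ i ∈ Finset.Icc 1 n, Polynomial.C (b i) * Polynomial.X ^ (n - i))
    (lam0 : ℂ)
    (hroot : P.IsRoot lam0)
    (hmax : ∀ μ : ℂ, P.IsRoot μ → ‖μ‖ ≤ ‖lam0‖)
    (huniq : ∀ μ : ℂ, P.IsRoot μ → ‖μ‖ = ‖lam0‖ → μ ≠ lam0 →
      Polynomial.rootMultiplicity μ P < Polynomial.rootMultiplicity lam0 P)
    (F0 : ℕ → ℂ)
    (h0init : ∀ k < n - 1, F0 k = 0) (h0last : F0 (n - 1) = 1)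
    (h0rec : ∀ k, n ≤ k → F0 k = ∑ i ∈ Finset.Icc 1 n, b i * F0 (k - i)) :
    ∃ k0 : ℕ, (∀ k > k0, F0 k ≠ 0) ∧
      Filter.Tendsto (fun k => F0 (k + 1) / F0 k) Filter.atTop (nhds lam0) := by
  classical
  have hPne : P ≠ 0 := (FRP_monic n hn b hbn P hP).ne_zero
  have hlam0 : lam0 ≠ 0 := FRP_root_ne_zero n hn b hbn P hP lam0 hroot
  set s : Finset ℂ := P.roots.toFinset with hs
  set m : ℂ → ℕ := fun μ => Polynomial.rootMultiplicity μ P with hm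
  have hroot_mem : ∀ μ ∈ s, P.IsRoot μ := by
    intro μ hμ
    rw [hs, Multiset.mem_toFinset, Polynomial.mem_roots hPne] at hμ
    exact hμ
  have hmem_root : lam0 ∈ s := by
    rw [hs, Multiset.mem_toFinset, Polynomial.mem_roots hPne]
    exact hroot
  have hm1 : ∀ μ ∈ s, 1 ≤ m μ := fun μ hμ =>
    (Polynomial.rootMultiplicity_pos hPne).2 (hroot_mem μ hμ)
  set M : ℕ := m lam0 with hM
  have hM1 : 1 ≤ M := hm1 lam0 hmem_root
  set e : ℕ := M - 1 with he
  obtain ⟨A, hA0, hrep⟩ := FR_rep n hn b hbn P hP F0 h0init h0last h0rec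
  have hLne : A lam0 0 ≠ 0 := hA0 lam0 hmem_root
  set B : ℕ → ℂ := fun k => (Nat.choose (e + k) e : ℕ) with hB
  have hBne : ∀ k, B k ≠ 0 := by
    intro k
    rw [hB]
    exact_mod_cast Nat.cast_ne_zero.2 (Nat.choose_pos (show e ≤ e + k by omega)).ne'
  set D : ℕ → ℂ := fun k => B k * lam0 ^ k with hD
  have hDne : ∀ k, D k ≠ 0 := fun k => mul_ne_zero (hBne k) (pow_ne_zero k hlam0)
  set g : ℕ → ℂ := fun k => F0 k / D k with hg
  have hgF : ∀ k, F0 k = g k * D k := fun k => (div_mul_cancel₀ _ (hDne k)).symm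
  -- limit of g
  have hgsum : ∀ k, g k = ∑ μ ∈ s, ∑ j ∈ Finset.range (m μ),
      A μ j * (((Nat.choose ((m μ - 1 - j) + k) (m μ - 1 - j) : ℂ) * μ ^ k) / D k) := by
    intro k
    rw [hg]
    simp only
    rw [hrep k, Finset.sum_div]
    apply Finset.sum_congr rfl
    intro μ hμ
    rw [Finset.sum_div]
    apply Finset.sum_congr rfl
    intro j hj
    rw [mul_div_assoc]
  have hterm : ∀ μ ∈ s, ∀ j ∈ Finset.range (m μ),
      Filter.Tendsto (fun k => A μ j *
          (((Nat.choose ((m μ - 1 - j) + k) (m μ - 1 - j) : ℂ) * μ ^ k) / D k))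
        Filter.atTop (nhds (if μ = lam0 ∧ j = 0 then A lam0 0 else 0)) := by
    intro μ hμ j hj
    have hjm : j < m μ := Finset.mem_range.1 hj
    by_cases hcase : μ = lam0 ∧ j = 0
    · obtain ⟨rfl, rfl⟩ := hcase
      have heq : ∀ k : ℕ, A μ 0 *
          (((Nat.choose ((m μ - 1 - 0) + k) (m μ - 1 - 0) : ℂ) * μ ^ k) / D k) = A μ 0 := by
        intro k
        have : (m μ - 1 - 0) = e := by omega
        rw [this, hD]
        simp only
        rw [div_self (hDne k), mul_one]
      rw [if_pos ⟨rfl, rfl⟩]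
      exact Filter.Tendsto.congr (fun k => (heq k).symm) tendsto_const_nhds
    · rw [if_neg hcase]
      set d : ℕ := m μ - 1 - j with hd
      have hcase2 : ‖μ‖ < ‖lam0‖
          ∨ (‖μ‖ = ‖lam0‖ ∧ d < e) := by
        rcases lt_or_eq_of_le (hmax μ (hroot_mem μ hμ)) with hlt | heqabs
        · exact Or.inl hlt
        · right
          refine ⟨heqabs, ?_⟩
          by_cases hμlam : μ = lam0
          · subst hμlam
            have hj0 : j ≠ 0 := fun h => hcase ⟨rfl, h⟩
            have : m μ = M := rfl
            omega
          · have := huniq μ (hroot_mem μ hμ) heqabs hμlam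
            have hmμ : m μ < M := this
            have h1 := hm1 μ hμ
            omega
      have h0 := FR_term_tendsto_zero μ lam0 hlam0 d e hcase2
      have h1 := h0.const_mul (A μ j)
      rw [mul_zero] at h1
      apply h1.congr
      intro k
      rw [hD, hB]
  have hsumlim : (∑ μ ∈ s, ∑ j ∈ Finset.range (m μ),
      if μ = lam0 ∧ j = 0 then A lam0 0 else 0) = A lam0 0 := by
    rw [Finset.sum_eq_single lam0 (fun μ hμ hne => Finset.sum_eq_zero (fun j hj => by
        rw [if_neg (fun h => hne h.1)]))
      (fun h => absurd hmem_root h)]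
    rw [Finset.sum_eq_single 0 (fun j hj hne => by rw [if_neg (fun h => hne h.2)])
      (fun h => absurd (Finset.mem_range.2 (by omega)) h)]
    simp
  have hgt : Filter.Tendsto g Filter.atTop (nhds (A lam0 0)) := by
    have h2 := tendsto_finset_sum s (fun μ hμ =>
      tendsto_finset_sum (Finset.range (m μ)) (fun j hj => hterm μ hμ j hj))
    rw [hsumlim] at h2
    exact Filter.Tendsto.congr (fun k => (hgsum k).symm) h2
  have hne : ∀ᶠ k in Filter.atTop, g k ≠ 0 := hgt.eventually_ne hLne
  obtain ⟨k0, hk0⟩ := Filter.eventually_atTop.1 hne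
  refine ⟨k0, fun k hk => ?_, ?_⟩
  · intro hF0
    apply hk0 k (le_of_lt hk)
    rw [hg]
    simp only
    rw [hF0, zero_div]
  · -- B ratio limit
    have hBrec : ∀ k : ℕ, B (k+1) * ((k:ℂ)+1) = ((e+k+1 : ℕ) : ℂ) * B k := by
      intro k
      rw [hB]
      simp only
      have hsym1 : Nat.choose (e+k) e = Nat.choose (e+k) k :=
        Nat.choose_symm_add (a := e) (b := k) ▸ rfl
      have hsym2 : Nat.choose (e+(k+1)) e = Nat.choose (e+k+1) (k+1) := by
        rw [show e+(k+1) = e+k+1 by omega]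
        exact Nat.choose_symm_add (a := e) (b := k+1) ▸ (by rw [show e+(k+1) = e+k+1 by omega])
      have hnat : (e+k+1) * Nat.choose (e+k) k = Nat.choose (e+k+1) (k+1) * (k+1) :=
        Nat.add_one_mul_choose_eq (e+k) k
      rw [hsym2, hsym1]
      exact_mod_cast hnat.symm
    have hk1ne : ∀ k : ℕ, ((k:ℂ)+1) ≠ 0 := fun k => by
      have h7 : ((k+1 : ℕ) : ℂ) ≠ 0 := Nat.cast_ne_zero.2 (Nat.succ_ne_zero k)
      push_cast at h7
      exact h7
    have hBratio : ∀ k : ℕ, B (k+1) / B k = 1 + (e:ℂ)/((k:ℂ)+1) := by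
      intro k
      have h3 := hBrec k
      field_simp [hBne, hk1ne k]
      push_cast at h3 ⊢
      linear_combination h3
    have hinv : Filter.Tendsto (fun k : ℕ => (e:ℂ)/((k:ℂ)+1)) Filter.atTop (nhds 0) := by
      apply squeeze_zero_norm (a := fun k : ℕ => (e:ℝ) * (1/((k:ℝ)+1)))
      · intro k
        rw [norm_div]
        have h4 : ‖((k:ℂ)+1)‖ = (k:ℝ)+1 := by
          rw [show ((k:ℂ)+1) = ((k+1 : ℕ) : ℂ) by push_cast; ring]
          rw [Complex.norm_natCast]
          push_cast; ring
        rw [h4, Complex.norm_natCast, mul_one_div]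
      · have := tendsto_one_div_add_atTop_nhds_zero_nat.const_mul ((e:ℝ))
        simpa using this
    have hBq : Filter.Tendsto (fun k => B (k+1) / B k) Filter.atTop (nhds 1) := by
      have h5 : Filter.Tendsto (fun k : ℕ => 1 + (e:ℂ)/((k:ℂ)+1)) Filter.atTop (nhds 1) := by
        have := hinv.const_add (1:ℂ)
        simpa using this
      exact Filter.Tendsto.congr (fun k => (hBratio k).symm) h5
    have hshift : Filter.Tendsto (fun k => g (k+1)) Filter.atTop (nhds (A lam0 0)) :=
      hgt.comp (Filter.tendsto_add_atTop_nat 1)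
    have hgq : Filter.Tendsto (fun k => g (k+1) / g k) Filter.atTop (nhds 1) := by
      have := hshift.div hgt hLne
      rwa [div_self hLne] at this
    have hfull : Filter.Tendsto (fun k => g (k+1) / g k * (B (k+1) / B k) * lam0)
        Filter.atTop (nhds lam0) := by
      have := (hgq.mul hBq).mul_const lam0
      rwa [one_mul, one_mul] at this
    apply hfull.congr'
    filter_upwards [hne] with k hgk
    rw [hgF (k+1), hgF k, hD]
    simp only
    field_simp [hBne, pow_succ]
    ring
end
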